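/- Let X be a uniform space, κ an infinite cardinal, and suppose the entourage poset of X has calibre (κ⁺, ω), where κ⁺ is the successor cardinal of κ. Then every totally bounded subset A of X (for every entourage U there is a finite F ⊆ X with A ⊆ ⋃_{x∈F} U[x]), equipped with the subspace topology, has a topological base of cardinality at most κ. -/

import Mathlib

open Set Topology Cardinal
open scoped Uniformity SetRel

universe u

/-- A directed set `P` has calibre `(μ, ω)` if every subset of cardinality `μ`
has an infinite subset with an upper bound. -/
def Calibre (P : Type u) [Preorder P] (μ : Cardinal.{u}) : Prop :=
  ∀ S : Set P, #S = μ → ∃ T ⊆ S, T.Infinite ∧ BddAbove T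

/-- The poset of entourages of a uniform space, ordered by reverse inclusion. -/
abbrev EntouragePoset (X : Type*) [UniformSpace X] :=
  ({U : Set (X × X) // U ∈ uniformity X})ᵒᵈ

abbrev SymmetricRel {α : Type*} (V : Set (α × α)) : Prop := SetRel.IsSymm V

abbrev symmetrizeRel {α : Type*} (V : Set (α × α)) : Set (α × α) := SetRel.symmetrize V

lemma symmetric_symmetrizeRel {α : Type*} (V : Set (α × α)) :
    SymmetricRel (symmetrizeRel V) := SetRel.isSymm_symmetrize

lemma symmetrizeRel_subset_self {α : Type*} (V : Set (α × α)) : symmetrizeRel V ⊆ V :=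
  SetRel.symmetrize_subset_self

lemma SymmetricRel.mk_mem_comm {α : Type*} {V : Set (α × α)} (h : SymmetricRel V) {x y : α} :
    (x, y) ∈ V ↔ (y, x) ∈ V := by
  haveI := h
  exact SetRel.comm V

lemma mem_compRel {α : Type*} {r₁ r₂ : Set (α × α)} {x y : α} :
    (x, y) ∈ r₁ ○ r₂ ↔ ∃ z, (x, z) ∈ r₁ ∧ (z, y) ∈ r₂ := Iff.rfl

lemma compRel_assoc {α : Type*} {r s t : Set (α × α)} : r ○ s ○ t = r ○ (s ○ t) :=
  SetRel.comp_assoc r s t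

lemma compRel_mono {α : Type*} {f g h k : Set (α × α)} (h₁ : f ⊆ h) (h₂ : g ⊆ k) :
    f ○ g ⊆ h ○ k := SetRel.comp_subset_comp h₁ h₂

private lemma five_chain {Y : Type*} [UniformSpace Y] {s : Set (Y × Y)} (hs : s ∈ uniformity Y) :
    ∃ t ∈ uniformity Y, SymmetricRel t ∧ t ○ (t ○ (t ○ (t ○ t))) ⊆ s := by
  obtain ⟨t₁, ht₁, h₁⟩ := comp_mem_uniformity_sets hs
  obtain ⟨t₂, ht₂, h₂⟩ := comp_mem_uniformity_sets ht₁
  obtain ⟨t₀, ht₀, h₀⟩ := comp_mem_uniformity_sets ht₂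
  refine ⟨symmetrizeRel t₀, symmetrize_mem_uniformity ht₀, symmetric_symmetrizeRel t₀, ?_⟩
  set t := symmetrizeRel t₀ with htdef
  have hts : t ⊆ t₀ := symmetrizeRel_subset_self t₀
  have ht21 : t₂ ⊆ t₁ := (subset_comp_self_of_mem_uniformity ht₂).trans h₂
  have ht02 : t₀ ⊆ t₂ := (subset_comp_self_of_mem_uniformity ht₀).trans h₀
  rintro ⟨a, b⟩ hab
  obtain ⟨x1, h01, hrest⟩ := mem_compRel.1 hab
  obtain ⟨x2, h12, hrest⟩ := mem_compRel.1 hrest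
  obtain ⟨x3, h23, hrest⟩ := mem_compRel.1 hrest
  obtain ⟨x4, h34, h45⟩ := mem_compRel.1 hrest
  have hax2 : (a, x2) ∈ t₂ := h₀ (mem_compRel.2 ⟨x1, hts h01, hts h12⟩)
  have hx2x4 : (x2, x4) ∈ t₂ := h₀ (mem_compRel.2 ⟨x3, hts h23, hts h34⟩)
  have hax4 : (a, x4) ∈ t₁ := h₂ (mem_compRel.2 ⟨x2, hax2, hx2x4⟩)
  have hx4b : (x4, b) ∈ t₁ := ht21 (ht02 (hts h45))
  exact h₁ (mem_compRel.2 ⟨x4, hax4, hx4b⟩)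

private lemma basis_of_uniformity_base {Y : Type u} [UniformSpace Y] {κ : Cardinal.{u}}
    (hκ : ℵ₀ ≤ κ) (hY : TotallyBounded (univ : Set Y))
    (B₀ : Set (Set (Y × Y))) (hcard : #B₀ ≤ κ)
    (hmem : ∀ s ∈ B₀, s ∈ uniformity Y) (hbase : ∀ u ∈ uniformity Y, ∃ s ∈ B₀, s ⊆ u) :
    ∃ B : Set (Set Y), #B ≤ κ ∧ TopologicalSpace.IsTopologicalBasis B := by
  classical
  have hW : ∀ s : B₀, symmetrizeRel s.1 ∈ uniformity Y := fun s =>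
    symmetrize_mem_uniformity (hmem s.1 s.2)
  choose F hFfin hFcov using fun s : B₀ => hY _ (hW s)
  let g : B₀ → Y → Set Y := fun s y =>
    interior {x | (y, x) ∈ symmetrizeRel s.1 ○ symmetrizeRel s.1}
  refine ⟨⋃ s : B₀, (g s) '' (F s), ?_, ?_⟩
  · calc #(⋃ s : B₀, (g s) '' (F s)) ≤ Cardinal.sum fun s : B₀ => #((g s) '' (F s)) :=
          mk_iUnion_le_sum_mk
      _ ≤ Cardinal.sum fun _ : B₀ => ℵ₀ :=
          Cardinal.sum_le_sum _ _ fun s => (((hFfin s).image (g s)).lt_aleph0).le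
      _ = #B₀ * ℵ₀ := Cardinal.sum_const' _ _
      _ ≤ κ * κ := mul_le_mul' hcard hκ
      _ = κ := Cardinal.mul_eq_self hκ
  · apply TopologicalSpace.isTopologicalBasis_of_isOpen_of_nhds
    · rintro u hu
      simp only [mem_iUnion, mem_image] at hu
      obtain ⟨s, y, _, rfl⟩ := hu
      exact isOpen_interior
    · intro a u ha hu
      obtain ⟨U, hU, hball⟩ := UniformSpace.mem_nhds_iff.1 (hu.mem_nhds ha)
      obtain ⟨V, hV, hVsymm, hV3⟩ := comp_comp_symm_mem_uniformity_sets hU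
      obtain ⟨s, hsB, hsV⟩ := hbase V hV
      set W := symmetrizeRel s with hWdef
      have hWV : W ⊆ V := (symmetrizeRel_subset_self s).trans hsV
      have hWsymm : SymmetricRel W := symmetric_symmetrizeRel s
      have hWu : W ∈ uniformity Y := hW ⟨s, hsB⟩
      obtain ⟨y, hyF, hay⟩ : ∃ y ∈ F ⟨s, hsB⟩, (a, y) ∈ W := by
        have := hFcov ⟨s, hsB⟩ (mem_univ a)
        simpa using this
      refine ⟨g ⟨s, hsB⟩ y, mem_iUnion.2 ⟨⟨s, hsB⟩, mem_image_of_mem _ hyF⟩, ?_, ?_⟩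
      · rw [mem_interior_iff_mem_nhds]
        refine Filter.mem_of_superset (UniformSpace.ball_mem_nhds a hWu) ?_
        intro z hz
        exact mem_compRel.2 ⟨a, hWsymm.mk_mem_comm.1 hay, hz⟩
      · intro z hz
        have hz' : z ∈ {x | (y, x) ∈ W ○ W} := interior_subset hz
        have h3 : (a, z) ∈ V ○ V ○ V := by
          rw [compRel_assoc]
          exact mem_compRel.2 ⟨y, hWV hay, compRel_mono hWV hWV hz'⟩
        exact hball (hV3 h3)

private lemma totallyBounded_univ_subtype {X : Type u} [UniformSpace X] {A : Set X}
    (hA : TotallyBounded A) : TotallyBounded (univ : Set A) := by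
  intro d hd
  rw [uniformity_subtype] at hd
  obtain ⟨U, hU, hUd⟩ := hd
  obtain ⟨t, htA, htfin, htcov⟩ := totallyBounded_iff_subset.1 hA U hU
  refine ⟨Subtype.val ⁻¹' t, htfin.preimage Subtype.val_injective.injOn, ?_⟩
  rintro ⟨x, hxA⟩ -
  obtain ⟨y, hy, hxy⟩ := mem_iUnion₂.1 (htcov hxA)
  exact mem_iUnion₂.2 ⟨⟨y, htA hy⟩, hy, hUd hxy⟩

theorem stmt11 {X : Type u} [UniformSpace X]
    (κ : Cardinal.{u}) (hκ : ℵ₀ ≤ κ)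
    (hcal : Calibre (EntouragePoset X) (Order.succ κ))
    (A : Set X) (hA : TotallyBounded A) :
    ∃ B : Set (Set A), #B ≤ κ ∧ TopologicalSpace.IsTopologicalBasis B := by
  classical
  let m : ↥A × ↥A → X × X := fun q => (q.1.1, q.2.1)
  let E := {U : Set (X × X) // U ∈ uniformity X}
  by_cases hP : ∃ S : Set E, #S ≤ κ ∧ ∀ U ∈ uniformity X, ∃ V ∈ S, m ⁻¹' V.1 ⊆ m ⁻¹' U
  · obtain ⟨S, hScard, hSbase⟩ := hP
    refine basis_of_uniformity_base hκ (totallyBounded_univ_subtype hA)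
      ((fun V : E => m ⁻¹' V.1) '' S) (le_trans mk_image_le hScard) ?_ ?_
    · rintro s ⟨V, _, rfl⟩
      rw [uniformity_subtype]
      exact Filter.preimage_mem_comap V.2
    · intro u hu
      rw [uniformity_subtype] at hu
      obtain ⟨U, hU, hUu⟩ := hu
      obtain ⟨V, hVS, hV⟩ := hSbase U hU
      exact ⟨m ⁻¹' V.1, mem_image_of_mem _ hVS, hV.trans hUu⟩
  · push_neg at hP
    exfalso
    let comp5 : Set (X × X) → Set (X × X) := fun U => U ○ (U ○ (U ○ (U ○ U)))
    have key : ∀ S : Set E, #S ≤ κ → ∃ U : E, SymmetricRel U.1 ∧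
        ∀ V ∈ S, ¬ (m ⁻¹' V.1 ⊆ m ⁻¹' comp5 U.1) := by
      intro S hS
      obtain ⟨U, hU, hUprop⟩ := hP S hS
      obtain ⟨t, ht, htsymm, ht5⟩ := five_chain hU
      exact ⟨⟨t, ht⟩, htsymm, fun V hV hsub =>
        hUprop V hV (hsub.trans (preimage_mono ht5))⟩
    set c : Cardinal.{u} := Order.succ κ with hc
    let ι := c.ord.ToType
    have hbound : ∀ (i : ι) (g : ∀ j, j < i → E),
        #{e : E | ∃ j, ∃ h : j < i, g j h = e} ≤ κ := by
      intro i g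
      have h1 : #{e : E | ∃ j, ∃ h : j < i, g j h = e} ≤ #(Iio i) := by
        have hsurj : {e : E | ∃ j, ∃ h : j < i, g j h = e} ⊆
            range (fun p : Iio i => g p.1 p.2) := by
          rintro e ⟨j, hj, rfl⟩
          exact ⟨⟨j, hj⟩, rfl⟩
        exact (mk_le_mk_of_subset hsurj).trans (mk_range_le)
      exact h1.trans (Order.lt_succ_iff.1 (Cardinal.mk_Iio_ord_toType i))
    have wfι : WellFounded ((· < ·) : ι → ι → Prop) := IsWellFounded.wf
    let H : (i : ι) → (∀ j, j < i → E) → E := fun i g => (key _ (hbound i g)).choose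
    let f : ι → E := wfι.fix H
    have h_eq : ∀ i : ι, f i = H i (fun j _ => f j) := fun i => wfι.fix_eq H i
    have hf : ∀ i : ι, SymmetricRel (f i).1 ∧
        ∀ j, j < i → ¬ (m ⁻¹' (f j).1 ⊆ m ⁻¹' comp5 (f i).1) := by
      intro i
      have hs := (key _ (hbound i (fun j _ => f j))).choose_spec
      have he : f i = (key _ (hbound i (fun j _ => f j))).choose := h_eq i
      rw [he]
      exact ⟨hs.1, fun j hj hsub => hs.2 (f j) ⟨j, hj, rfl⟩ hsub⟩
    have hrefl5 : ∀ U : Set (X × X), U ∈ uniformity X → U ⊆ comp5 U := by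
      rintro U hU ⟨a, b⟩ hab
      have hb : (b, b) ∈ U := refl_mem_uniformity hU
      exact mem_compRel.2 ⟨b, hab, mem_compRel.2 ⟨b, hb,
        mem_compRel.2 ⟨b, hb, mem_compRel.2 ⟨b, hb, hb⟩⟩⟩⟩
    have finj : Function.Injective f := by
      intro i j hij
      by_contra hne
      rcases lt_or_gt_of_ne hne with h | h
      · exact (hf j).2 i h (by rw [hij]; exact preimage_mono (hrefl5 _ (f j).2))
      · exact (hf i).2 j h (by rw [← hij]; exact preimage_mono (hrefl5 _ (f i).2))
    let f' : ι → EntouragePoset X := fun i => OrderDual.toDual (f i)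
    have f'inj : Function.Injective f' := fun i j h => finj (by exact congrArg OrderDual.ofDual h)
    have hcardS : #(range f') = Order.succ κ := by
      rw [Cardinal.mk_range_eq f' f'inj]
      show #ι = c
      rw [Cardinal.mk_toType, Cardinal.card_ord]
    obtain ⟨T, hTS, hTinf, hTbdd⟩ := hcal (range f') hcardS
    obtain ⟨W₀, hW₀⟩ := hTbdd
    set W : Set (X × X) := symmetrizeRel (OrderDual.ofDual W₀).1 with hWdef
    have hWu : W ∈ uniformity X := symmetrize_mem_uniformity (OrderDual.ofDual W₀).2
    have hWsymm : SymmetricRel W := symmetric_symmetrizeRel _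
    have hWsub : ∀ u ∈ T, W ⊆ (OrderDual.ofDual u).1 := by
      intro u hu
      have h1 : u ≤ W₀ := hW₀ hu
      have h2 : (OrderDual.ofDual W₀).1 ⊆ (OrderDual.ofDual u).1 := h1
      exact (symmetrizeRel_subset_self _).trans h2
    obtain ⟨F, hFfin, hFcov⟩ := hA W hWu
    haveI : Finite ↥F := hFfin.to_subtype
    haveI : Infinite ↥T := hTinf.to_subtype
    let pattern : ↥T → Set (↥F × ↥F) := fun u =>
      {yz | ∃ p ∈ A, ∃ q ∈ A, (p, q) ∈ (OrderDual.ofDual u.1).1 ∧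
        (yz.1.1, p) ∈ W ∧ (yz.2.1, q) ∈ W}
    obtain ⟨u, v, huv, hpat⟩ := Finite.exists_ne_map_eq_of_infinite pattern
    have main : ∀ (u v : ↥T) (i j : ι), f' i = u.1 → f' j = v.1 →
        pattern u = pattern v → i < j → False := by
      intro u v i j hu hv hpatuv hij
      apply (hf j).2 i hij
      rintro ⟨a, b⟩ hab
      have hab' : (a.1, b.1) ∈ (f i).1 := hab
      obtain ⟨y, hyF, hay⟩ : ∃ y ∈ F, (a.1, y) ∈ W := by
        have := hFcov a.2
        simpa using this
      obtain ⟨z, hzF, hbz⟩ : ∃ z ∈ F, (b.1, z) ∈ W := by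
        have := hFcov b.2
        simpa using this
      have hui : OrderDual.ofDual u.1 = f i := by rw [← hu]; rfl
      have hvj : OrderDual.ofDual v.1 = f j := by rw [← hv]; rfl
      have hyz : (⟨⟨y, hyF⟩, ⟨z, hzF⟩⟩ : ↥F × ↥F) ∈ pattern u := by
        refine ⟨a.1, a.2, b.1, b.2, ?_, hWsymm.mk_mem_comm.1 hay, hWsymm.mk_mem_comm.1 hbz⟩
        rw [hui]; exact hab'
      rw [hpatuv] at hyz
      obtain ⟨p, hpA, q, hqA, hpq, hyp, hzq⟩ := hyz
      have hWj : W ⊆ (f j).1 := by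
        have := hWsub v.1 v.2
        rwa [hvj] at this
      have hpq' : (p, q) ∈ (f j).1 := by rw [← hvj]; exact hpq
      show (a.1, b.1) ∈ comp5 (f j).1
      exact mem_compRel.2 ⟨y, hWj hay, mem_compRel.2 ⟨p, hWj hyp,
        mem_compRel.2 ⟨q, hpq', mem_compRel.2 ⟨z, hWj (hWsymm.mk_mem_comm.1 hzq),
          hWj (hWsymm.mk_mem_comm.1 hbz)⟩⟩⟩⟩
    obtain ⟨i, hi⟩ := hTS u.2
    obtain ⟨j, hj⟩ := hTS v.2
    have hij : i ≠ j := by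
      rintro rfl
      exact huv (Subtype.ext (hi.symm.trans hj))
    rcases lt_or_gt_of_ne hij with h | h
    · exact main u v i j hi hj hpat h
    · exact main v u j i hj hi hpat.symm h
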